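/- Let C = K[y_1,...,y_5]/(y_1^2,...,y_5^2, y_1y_2y_3y_4) over a field K of characteristic 0. Then the Hilbert series of C is 1 + 5t + 10t^2 + 10t^3 + 4t^4, and C has the Weak Lefschetz Property with Lefschetz element ℓ = y_1 + y_2 + y_3 + y_4 + y_5. -/

import Mathlib

open MvPolynomial

/-- The degree-`n` graded piece of the quotient of a polynomial ring by a
(homogeneous) ideal: the image of the homogeneous degree-`n` polynomials. -/
noncomputable def gradedPiece {K σ : Type*} [Field K] (I : Ideal (MvPolynomial σ K))
    (n : ℕ) : Submodule K (MvPolynomial σ K ⧸ I) :=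
  Submodule.map (Ideal.Quotient.mkₐ K I).toLinearMap (homogeneousSubmodule σ K n)

/-- The ideal `(y_1^2,…,y_5^2, y_1y_2y_3y_4)`, an initial-ideal presentation of
the AOT algebra of the 5-cycle. -/
noncomputable def fiveCycleIdeal (K : Type*) [Field K] : Ideal (MvPolynomial (Fin 5) K) :=
  Ideal.span ((Set.range fun k : Fin 5 => (X k : MvPolynomial (Fin 5) K) ^ 2) ∪
    {X 0 * X 1 * X 2 * X 3})

set_option synthInstance.maxHeartbeats 1000000
set_option maxHeartbeats 1000000

namespace Stmt14Aux

noncomputable def eS (S : Finset (Fin 5)) : Fin 5 →₀ ℕ := ∑ k ∈ S, Finsupp.single k 1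

lemma eS_apply (S : Finset (Fin 5)) (k : Fin 5) : eS S k = if k ∈ S then 1 else 0 := by
  classical
  rw [eS, Finset.sum_apply']
  simp [Finsupp.single_apply, Finset.sum_ite_eq']

lemma eS_support (S : Finset (Fin 5)) : (eS S).support = S := by
  ext k
  simp only [Finsupp.mem_support_iff, eS_apply]
  split_ifs with h <;> simp [h]

lemma eS_degree (S : Finset (Fin 5)) : (eS S).degree = S.card := by
  rw [Finsupp.degree_apply, eS_support]
  rw [Finset.sum_congr rfl (fun k hk => by rw [eS_apply, if_pos hk])]
  simp

def Bad (m : Fin 5 →₀ ℕ) : Prop := (∃ k, 2 ≤ m k) ∨ eS {0,1,2,3} ≤ m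

noncomputable instance : DecidablePred Bad := fun m => Classical.dec _

lemma ideal_eq (K : Type*) [Field K] : fiveCycleIdeal K =
    Ideal.span ((fun s => monomial s (1:K)) ''
      ((Set.range fun k : Fin 5 => Finsupp.single k 2) ∪ {eS {0,1,2,3}})) := by
  unfold fiveCycleIdeal
  congr 1
  rw [Set.image_union, Set.image_singleton]
  congr 1
  · ext q
    simp only [Set.mem_range, Set.mem_image, X_pow_eq_monomial]
    constructor
    · rintro ⟨k, rfl⟩; exact ⟨Finsupp.single k 2, ⟨k, rfl⟩, rfl⟩
    · rintro ⟨s, ⟨k, rfl⟩, rfl⟩; exact ⟨k, rfl⟩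
  · have he : eS {0,1,2,3} = Finsupp.single (0:Fin 5) 1 + Finsupp.single 1 1 +
      Finsupp.single 2 1 + Finsupp.single 3 1 := by
      rw [eS, Finset.sum_insert (by decide), Finset.sum_insert (by decide),
        Finset.sum_insert (by decide), Finset.sum_singleton]
      abel
    rw [he]
    congr 1
    rw [X, X, X, X, monomial_mul, monomial_mul, monomial_mul, one_mul, one_mul, one_mul]

lemma mem_I {K : Type*} [Field K] (p : MvPolynomial (Fin 5) K) :
    p ∈ fiveCycleIdeal K ↔ ∀ m ∈ p.support, Bad m := by
  rw [ideal_eq, mem_ideal_span_monomial_image]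
  refine forall₂_congr fun m _ => ?_
  simp only [Bad, Set.mem_union, Set.mem_range, Set.mem_singleton_iff]
  constructor
  · rintro ⟨si, h | rfl, hle⟩
    · obtain ⟨k, rfl⟩ := h
      exact Or.inl ⟨k, Finsupp.single_le_iff.mp hle⟩
    · exact Or.inr hle
  · rintro (⟨k, hk⟩ | h)
    · exact ⟨Finsupp.single k 2, Or.inl ⟨k, rfl⟩, Finsupp.single_le_iff.mpr hk⟩
    · exact ⟨_, Or.inr rfl, h⟩

section Chunk2
variable {K : Type*} [Field K]

lemma bad_mem {m : Fin 5 →₀ ℕ} (hm : Bad m) (c : K) : monomial m c ∈ fiveCycleIdeal K := by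
  classical
  rw [mem_I]
  intro d hd
  rw [mem_support_iff, coeff_monomial] at hd
  by_cases h : m = d
  · exact h ▸ hm
  · rw [if_neg h] at hd; exact absurd rfl hd

/-- the "good part" of a polynomial -/
noncomputable def gp (p : MvPolynomial (Fin 5) K) : MvPolynomial (Fin 5) K :=
  AddMonoidAlgebra.ofCoeff (Finsupp.filter (fun m => ¬ Bad m) (AddMonoidAlgebra.coeff p))

lemma coeff_gp (m : Fin 5 →₀ ℕ) (p : MvPolynomial (Fin 5) K) :
    coeff m (gp p) = if ¬ Bad m then coeff m p else 0 := rfl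

lemma sub_gp_mem (p : MvPolynomial (Fin 5) K) : p - gp p ∈ fiveCycleIdeal K := by
  rw [mem_I]
  intro m hm
  rw [mem_support_iff, coeff_sub, coeff_gp] at hm
  by_contra hb
  rw [if_pos hb, sub_self] at hm
  exact hm rfl

lemma piece_rep {n : ℕ} {x : MvPolynomial (Fin 5) K ⧸ fiveCycleIdeal K}
    (hx : x ∈ gradedPiece (fiveCycleIdeal K) n) :
    ∃ p : MvPolynomial (Fin 5) K, p.IsHomogeneous n ∧ (∀ m, coeff m p ≠ 0 → ¬ Bad m) ∧
      Ideal.Quotient.mk (fiveCycleIdeal K) p = x := by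
  obtain ⟨p0, hp0, rfl⟩ := hx
  refine ⟨gp p0, ?_, ?_, ?_⟩
  · intro d hd
    rw [coeff_gp] at hd
    apply hp0
    intro h
    rw [h] at hd
    simp at hd
  · intro m hm
    rw [coeff_gp] at hm
    by_contra hb
    rw [if_neg (not_not_intro hb)] at hm
    exact hm rfl
  · have : Ideal.Quotient.mk (fiveCycleIdeal K) (gp p0) =
        Ideal.Quotient.mk (fiveCycleIdeal K) p0 := by
      rw [Ideal.Quotient.mk_eq_mk_iff_sub_mem]
      have := sub_gp_mem p0
      have h2 : gp p0 - p0 = -(p0 - gp p0) := by ring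
      rw [h2]
      exact Submodule.neg_mem _ this
    rw [this]
    simp [gradedPiece]

lemma mk_mem_piece {n : ℕ} {p : MvPolynomial (Fin 5) K} (hp : p.IsHomogeneous n) :
    Ideal.Quotient.mk (fiveCycleIdeal K) p ∈ gradedPiece (fiveCycleIdeal K) n :=
  ⟨p, hp, rfl⟩

end Chunk2

section Chunk3
variable {K : Type*} [Field K]

lemma le_one_of_not_bad {m : Fin 5 →₀ ℕ} (h : ¬ Bad m) (k : Fin 5) : m k ≤ 1 := by
  by_contra hk
  exact h (Or.inl ⟨k, by omega⟩)

lemma not_subset_of_not_bad {m : Fin 5 →₀ ℕ} (h : ¬ Bad m) :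
    ¬ ({0,1,2,3} : Finset (Fin 5)) ⊆ m.support := by
  intro hsub
  apply h
  refine Or.inr ?_
  intro k
  rw [eS_apply]
  split_ifs with hk
  · have := hsub hk
    rw [Finsupp.mem_support_iff] at this
    omega
  · exact Nat.zero_le _

lemma eq_eS_support {m : Fin 5 →₀ ℕ} (h : ∀ k, m k ≤ 1) : m = eS m.support := by
  ext k
  rw [eS_apply]
  split_ifs with hk
  · rw [Finsupp.mem_support_iff] at hk
    have := h k; omega
  · rw [Finsupp.mem_support_iff, not_not] at hk
    exact hk

lemma eS_sub_single {T : Finset (Fin 5)} {k : Fin 5} (hk : k ∈ T) :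
    eS T - Finsupp.single k 1 = eS (T.erase k) := by
  ext j
  rw [Finsupp.tsub_apply, eS_apply, eS_apply, Finsupp.single_apply]
  by_cases hjk : j = k
  · subst hjk; simp [hk, Finset.mem_erase]
  · by_cases hjT : j ∈ T <;>
      simp [hjk, Ne.symm hjk, hjT, Finset.mem_erase]

lemma eS_add_single {S : Finset (Fin 5)} {k : Fin 5} (hk : k ∉ S) :
    Finsupp.single k 1 + eS S = eS (insert k S) := by
  ext j
  rw [Finsupp.add_apply, eS_apply, eS_apply, Finsupp.single_apply]
  by_cases hjk : j = k
  · subst hjk; simp [hk, Finset.mem_insert]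
  · by_cases hjS : j ∈ S <;>
      simp [hjk, Ne.symm hjk, hjS, Finset.mem_insert]

lemma not_bad_eS {T : Finset (Fin 5)} (hT : ¬ ({0,1,2,3} : Finset (Fin 5)) ⊆ T) :
    ¬ Bad (eS T) := by
  intro hb
  rcases hb with ⟨k, hk⟩ | hle
  · rw [eS_apply] at hk
    split_ifs at hk <;> omega
  · apply hT
    intro k hk
    have := hle k
    rw [eS_apply, eS_apply, if_pos hk] at this
    split_ifs at this with h
    · exact h
    · omega

/-- the index type for the monomial basis in degree n -/
abbrev Idx (n : ℕ) := {S : Finset (Fin 5) // S.card = n ∧ ¬ ({0,1,2,3} : Finset (Fin 5)) ⊆ S}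

noncomputable def bV (K : Type*) [Field K] (n : ℕ) (S : Idx n) :
    MvPolynomial (Fin 5) K ⧸ fiveCycleIdeal K :=
  Ideal.Quotient.mk (fiveCycleIdeal K) (monomial (eS S.1) 1)

lemma homog_eS (S : Finset (Fin 5)) (c : K) :
    (monomial (eS S) c).IsHomogeneous S.card :=
  isHomogeneous_monomial c (eS_degree S)

lemma piece_eq_span (n : ℕ) :
    gradedPiece (fiveCycleIdeal K) n = Submodule.span K (Set.range (bV K n)) := by
  apply le_antisymm
  · rintro x hx
    obtain ⟨p, hhom, hgood, rfl⟩ := piece_rep hx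
    rw [MvPolynomial.as_sum p,
      show Ideal.Quotient.mk (fiveCycleIdeal K) = ⇑(Ideal.Quotient.mkₐ K (fiveCycleIdeal K))
        from rfl, map_sum]
    apply Submodule.sum_mem
    intro m hm
    rw [mem_support_iff] at hm
    have hnb := hgood m hm
    have hle := le_one_of_not_bad hnb
    have hm_eq : m = eS m.support := eq_eS_support hle
    have hdeg : m.degree = n := by
      by_contra h
      exact hm (hhom.coeff_eq_zero h)
    have hcard : m.support.card = n := by
      rw [hm_eq, eS_degree] at hdeg; exact hdeg
    have hgs : ¬ ({0,1,2,3} : Finset (Fin 5)) ⊆ m.support := not_subset_of_not_bad hnb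
    have : monomial m (coeff m p) = coeff m p • monomial (eS m.support) 1 := by
      rw [smul_monomial, smul_eq_mul, mul_one, ← hm_eq]
    rw [this, map_smul]
    exact Submodule.smul_mem _ _ (Submodule.subset_span ⟨⟨m.support, hcard, hgs⟩, rfl⟩)
  · rw [Submodule.span_le]
    rintro x ⟨S, rfl⟩
    have := homog_eS (K := K) S.1 1
    rw [S.2.1] at this
    exact mk_mem_piece this

lemma eS_inj {S T : Finset (Fin 5)} (h : eS S = eS T) : S = T := by
  rw [← eS_support S, ← eS_support T, h]

lemma bV_lin_indep (n : ℕ) : LinearIndependent K (bV K n) := by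
  rw [linearIndependent_iff']
  intro t g hsum S hS
  have hpoly : (∑ T ∈ t, g T • monomial (eS T.1) (1 : K)) ∈ fiveCycleIdeal K := by
    rw [← Ideal.Quotient.eq_zero_iff_mem,
      show Ideal.Quotient.mk (fiveCycleIdeal K) = ⇑(Ideal.Quotient.mkₐ K (fiveCycleIdeal K))
        from rfl, map_sum]
    rw [← hsum]
    apply Finset.sum_congr rfl
    intro T _
    rw [map_smul]
    rfl
  have hco : coeff (eS S.1) (∑ T ∈ t, g T • monomial (eS T.1) (1 : K)) = g S := by
    classical
    rw [coeff_sum]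
    rw [Finset.sum_eq_single S]
    · rw [coeff_smul, coeff_monomial, if_pos rfl, smul_eq_mul, mul_one]
    · intro T _ hTS
      rw [coeff_smul, coeff_monomial, if_neg, smul_eq_mul, mul_zero]
      intro h
      exact hTS (Subtype.ext (eS_inj h))
    · intro h; exact absurd hS h
  have hz : coeff (eS S.1) (∑ T ∈ t, g T • monomial (eS T.1) (1 : K)) = 0 := by
    by_contra h
    exact not_bad_eS S.2.2 ((mem_I _).mp hpoly _ (mem_support_iff.mpr h))
  rw [hco] at hz
  exact hz

lemma finrank_piece (n : ℕ) :
    Module.finrank K (gradedPiece (fiveCycleIdeal K) n) = Fintype.card (Idx n) := by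
  rw [piece_eq_span]
  exact finrank_span_eq_card (bV_lin_indep n)

end Chunk3

section Chunk4
variable {K : Type*} [Field K]

lemma eqn {p : MvPolynomial (Fin 5) K}
    (hp : p * (∑ k : Fin 5, X k) ∈ fiveCycleIdeal K) {T : Finset (Fin 5)}
    (hT : ¬ ({0,1,2,3} : Finset (Fin 5)) ⊆ T) :
    ∑ k ∈ T, coeff (eS (T.erase k)) p = 0 := by
  classical
  have h0 : coeff (eS T) (p * ∑ k : Fin 5, X k) = 0 := by
    by_contra h
    exact not_bad_eS hT ((mem_I _).mp hp _ (mem_support_iff.mpr h))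
  rw [Finset.mul_sum, coeff_sum] at h0
  have h1 : ∀ k : Fin 5, coeff (eS T) (p * X k) =
      if k ∈ T then coeff (eS (T.erase k)) p else 0 := by
    intro k
    rw [coeff_mul_X', eS_support]
    split_ifs with h
    · rw [eS_sub_single h]
    · rfl
  rw [Finset.sum_congr rfl (fun k _ => h1 k)] at h0
  rw [Finset.sum_ite_mem, Finset.univ_inter] at h0
  exact h0

lemma card_le_one_of_not_bad {m : Fin 5 →₀ ℕ} (h : ¬ Bad m) : True := trivial

lemma idx_empty {i : ℕ} (hi : 5 ≤ i) : IsEmpty (Idx i) := by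
  constructor
  rintro ⟨S, hcard, hgood⟩
  have h5 : S.card ≤ 5 := le_trans (Finset.card_le_univ S) (by simp)
  have : S.card = 5 := by omega
  have : S = Finset.univ := Finset.eq_univ_of_card S (by simpa using this)
  exact hgood (this ▸ fun k _ => Finset.mem_univ k)

lemma piece_bot {i : ℕ} (hi : 5 ≤ i) : gradedPiece (fiveCycleIdeal K) i = ⊥ := by
  rw [piece_eq_span]
  have := idx_empty hi
  rw [Set.range_eq_empty (bV K i), Submodule.span_empty]

end Chunk4

section Chunk5
variable {K : Type*} [Field K] [CharZero K]

lemma solve0 {p : MvPolynomial (Fin 5) K}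
    (heqs : ∀ T : Finset (Fin 5), ¬ ({0,1,2,3} : Finset (Fin 5)) ⊆ T →
      ∑ k ∈ T, coeff (eS (T.erase k)) p = 0) :
    ∀ S : Finset (Fin 5), S.card = 0 → coeff (eS S) p = 0 := by
  intro S hcard
  rw [Finset.card_eq_zero.mp hcard]
  have h := heqs {0} (by decide)
  rw [Finset.sum_singleton, show ({0} : Finset (Fin 5)).erase 0 = (∅ : Finset (Fin 5)) from by decide] at h
  exact h

lemma solve1 {p : MvPolynomial (Fin 5) K}
    (heqs : ∀ T : Finset (Fin 5), ¬ ({0,1,2,3} : Finset (Fin 5)) ⊆ T →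
      ∑ k ∈ T, coeff (eS (T.erase k)) p = 0) :
    ∀ S : Finset (Fin 5), S.card = 1 → coeff (eS S) p = 0 := by
  have henum : ∀ S : Finset (Fin 5), S.card = 1 → (S = {0} ∨ S = {1} ∨ S = {2} ∨ S = {3} ∨ S = {4}) := by decide
  have h01 := heqs {0,1} (by decide)
  rw [Finset.sum_insert (by decide), Finset.sum_singleton] at h01
  rw [show ({0,1} : Finset (Fin 5)).erase 0 = ({1} : Finset (Fin 5)) from by decide, show ({0,1} : Finset (Fin 5)).erase 1 = ({0} : Finset (Fin 5)) from by decide] at h01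
  have h02 := heqs {0,2} (by decide)
  rw [Finset.sum_insert (by decide), Finset.sum_singleton] at h02
  rw [show ({0,2} : Finset (Fin 5)).erase 0 = ({2} : Finset (Fin 5)) from by decide, show ({0,2} : Finset (Fin 5)).erase 2 = ({0} : Finset (Fin 5)) from by decide] at h02
  have h03 := heqs {0,3} (by decide)
  rw [Finset.sum_insert (by decide), Finset.sum_singleton] at h03
  rw [show ({0,3} : Finset (Fin 5)).erase 0 = ({3} : Finset (Fin 5)) from by decide, show ({0,3} : Finset (Fin 5)).erase 3 = ({0} : Finset (Fin 5)) from by decide] at h03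
  have h04 := heqs {0,4} (by decide)
  rw [Finset.sum_insert (by decide), Finset.sum_singleton] at h04
  rw [show ({0,4} : Finset (Fin 5)).erase 0 = ({4} : Finset (Fin 5)) from by decide, show ({0,4} : Finset (Fin 5)).erase 4 = ({0} : Finset (Fin 5)) from by decide] at h04
  have h12 := heqs {1,2} (by decide)
  rw [Finset.sum_insert (by decide), Finset.sum_singleton] at h12
  rw [show ({1,2} : Finset (Fin 5)).erase 1 = ({2} : Finset (Fin 5)) from by decide, show ({1,2} : Finset (Fin 5)).erase 2 = ({1} : Finset (Fin 5)) from by decide] at h12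
  have h13 := heqs {1,3} (by decide)
  rw [Finset.sum_insert (by decide), Finset.sum_singleton] at h13
  rw [show ({1,3} : Finset (Fin 5)).erase 1 = ({3} : Finset (Fin 5)) from by decide, show ({1,3} : Finset (Fin 5)).erase 3 = ({1} : Finset (Fin 5)) from by decide] at h13
  have h14 := heqs {1,4} (by decide)
  rw [Finset.sum_insert (by decide), Finset.sum_singleton] at h14
  rw [show ({1,4} : Finset (Fin 5)).erase 1 = ({4} : Finset (Fin 5)) from by decide, show ({1,4} : Finset (Fin 5)).erase 4 = ({1} : Finset (Fin 5)) from by decide] at h14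
  have h23 := heqs {2,3} (by decide)
  rw [Finset.sum_insert (by decide), Finset.sum_singleton] at h23
  rw [show ({2,3} : Finset (Fin 5)).erase 2 = ({3} : Finset (Fin 5)) from by decide, show ({2,3} : Finset (Fin 5)).erase 3 = ({2} : Finset (Fin 5)) from by decide] at h23
  have h24 := heqs {2,4} (by decide)
  rw [Finset.sum_insert (by decide), Finset.sum_singleton] at h24
  rw [show ({2,4} : Finset (Fin 5)).erase 2 = ({4} : Finset (Fin 5)) from by decide, show ({2,4} : Finset (Fin 5)).erase 4 = ({2} : Finset (Fin 5)) from by decide] at h24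
  have h34 := heqs {3,4} (by decide)
  rw [Finset.sum_insert (by decide), Finset.sum_singleton] at h34
  rw [show ({3,4} : Finset (Fin 5)).erase 3 = ({4} : Finset (Fin 5)) from by decide, show ({3,4} : Finset (Fin 5)).erase 4 = ({3} : Finset (Fin 5)) from by decide] at h34
  intro S hcard
  rcases henum S hcard with rfl | rfl | rfl | rfl | rfl
  · have h2 : (2 : K) * coeff (eS {0}) p = 0 := by
      linear_combination h01 + h02 - h12
    exact (mul_eq_zero.mp h2).resolve_left (by norm_num)
  · have h2 : (2 : K) * coeff (eS {1}) p = 0 := by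
      linear_combination h01 + h12 - h02
    exact (mul_eq_zero.mp h2).resolve_left (by norm_num)
  · have h2 : (2 : K) * coeff (eS {2}) p = 0 := by
      linear_combination h02 + h12 - h01
    exact (mul_eq_zero.mp h2).resolve_left (by norm_num)
  · have h2 : (2 : K) * coeff (eS {3}) p = 0 := by
      linear_combination h03 + h13 - h01
    exact (mul_eq_zero.mp h2).resolve_left (by norm_num)
  · have h2 : (2 : K) * coeff (eS {4}) p = 0 := by
      linear_combination h04 + h14 - h01
    exact (mul_eq_zero.mp h2).resolve_left (by norm_num)

lemma solve2 {p : MvPolynomial (Fin 5) K}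
    (heqs : ∀ T : Finset (Fin 5), ¬ ({0,1,2,3} : Finset (Fin 5)) ⊆ T →
      ∑ k ∈ T, coeff (eS (T.erase k)) p = 0) :
    ∀ S : Finset (Fin 5), S.card = 2 → coeff (eS S) p = 0 := by
  have henum : ∀ S : Finset (Fin 5), S.card = 2 → (S = {0,1} ∨ S = {0,2} ∨ S = {0,3} ∨ S = {0,4} ∨ S = {1,2} ∨ S = {1,3} ∨ S = {1,4} ∨ S = {2,3} ∨ S = {2,4} ∨ S = {3,4}) := by decide
  have h012 := heqs {0,1,2} (by decide)
  rw [Finset.sum_insert (by decide), Finset.sum_insert (by decide), Finset.sum_singleton] at h012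
  rw [show ({0,1,2} : Finset (Fin 5)).erase 0 = ({1,2} : Finset (Fin 5)) from by decide, show ({0,1,2} : Finset (Fin 5)).erase 1 = ({0,2} : Finset (Fin 5)) from by decide, show ({0,1,2} : Finset (Fin 5)).erase 2 = ({0,1} : Finset (Fin 5)) from by decide] at h012
  have h013 := heqs {0,1,3} (by decide)
  rw [Finset.sum_insert (by decide), Finset.sum_insert (by decide), Finset.sum_singleton] at h013
  rw [show ({0,1,3} : Finset (Fin 5)).erase 0 = ({1,3} : Finset (Fin 5)) from by decide, show ({0,1,3} : Finset (Fin 5)).erase 1 = ({0,3} : Finset (Fin 5)) from by decide, show ({0,1,3} : Finset (Fin 5)).erase 3 = ({0,1} : Finset (Fin 5)) from by decide] at h013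
  have h014 := heqs {0,1,4} (by decide)
  rw [Finset.sum_insert (by decide), Finset.sum_insert (by decide), Finset.sum_singleton] at h014
  rw [show ({0,1,4} : Finset (Fin 5)).erase 0 = ({1,4} : Finset (Fin 5)) from by decide, show ({0,1,4} : Finset (Fin 5)).erase 1 = ({0,4} : Finset (Fin 5)) from by decide, show ({0,1,4} : Finset (Fin 5)).erase 4 = ({0,1} : Finset (Fin 5)) from by decide] at h014
  have h023 := heqs {0,2,3} (by decide)
  rw [Finset.sum_insert (by decide), Finset.sum_insert (by decide), Finset.sum_singleton] at h023
  rw [show ({0,2,3} : Finset (Fin 5)).erase 0 = ({2,3} : Finset (Fin 5)) from by decide, show ({0,2,3} : Finset (Fin 5)).erase 2 = ({0,3} : Finset (Fin 5)) from by decide, show ({0,2,3} : Finset (Fin 5)).erase 3 = ({0,2} : Finset (Fin 5)) from by decide] at h023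
  have h024 := heqs {0,2,4} (by decide)
  rw [Finset.sum_insert (by decide), Finset.sum_insert (by decide), Finset.sum_singleton] at h024
  rw [show ({0,2,4} : Finset (Fin 5)).erase 0 = ({2,4} : Finset (Fin 5)) from by decide, show ({0,2,4} : Finset (Fin 5)).erase 2 = ({0,4} : Finset (Fin 5)) from by decide, show ({0,2,4} : Finset (Fin 5)).erase 4 = ({0,2} : Finset (Fin 5)) from by decide] at h024
  have h034 := heqs {0,3,4} (by decide)
  rw [Finset.sum_insert (by decide), Finset.sum_insert (by decide), Finset.sum_singleton] at h034
  rw [show ({0,3,4} : Finset (Fin 5)).erase 0 = ({3,4} : Finset (Fin 5)) from by decide, show ({0,3,4} : Finset (Fin 5)).erase 3 = ({0,4} : Finset (Fin 5)) from by decide, show ({0,3,4} : Finset (Fin 5)).erase 4 = ({0,3} : Finset (Fin 5)) from by decide] at h034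
  have h123 := heqs {1,2,3} (by decide)
  rw [Finset.sum_insert (by decide), Finset.sum_insert (by decide), Finset.sum_singleton] at h123
  rw [show ({1,2,3} : Finset (Fin 5)).erase 1 = ({2,3} : Finset (Fin 5)) from by decide, show ({1,2,3} : Finset (Fin 5)).erase 2 = ({1,3} : Finset (Fin 5)) from by decide, show ({1,2,3} : Finset (Fin 5)).erase 3 = ({1,2} : Finset (Fin 5)) from by decide] at h123
  have h124 := heqs {1,2,4} (by decide)
  rw [Finset.sum_insert (by decide), Finset.sum_insert (by decide), Finset.sum_singleton] at h124
  rw [show ({1,2,4} : Finset (Fin 5)).erase 1 = ({2,4} : Finset (Fin 5)) from by decide, show ({1,2,4} : Finset (Fin 5)).erase 2 = ({1,4} : Finset (Fin 5)) from by decide, show ({1,2,4} : Finset (Fin 5)).erase 4 = ({1,2} : Finset (Fin 5)) from by decide] at h124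
  have h134 := heqs {1,3,4} (by decide)
  rw [Finset.sum_insert (by decide), Finset.sum_insert (by decide), Finset.sum_singleton] at h134
  rw [show ({1,3,4} : Finset (Fin 5)).erase 1 = ({3,4} : Finset (Fin 5)) from by decide, show ({1,3,4} : Finset (Fin 5)).erase 3 = ({1,4} : Finset (Fin 5)) from by decide, show ({1,3,4} : Finset (Fin 5)).erase 4 = ({1,3} : Finset (Fin 5)) from by decide] at h134
  have h234 := heqs {2,3,4} (by decide)
  rw [Finset.sum_insert (by decide), Finset.sum_insert (by decide), Finset.sum_singleton] at h234
  rw [show ({2,3,4} : Finset (Fin 5)).erase 2 = ({3,4} : Finset (Fin 5)) from by decide, show ({2,3,4} : Finset (Fin 5)).erase 3 = ({2,4} : Finset (Fin 5)) from by decide, show ({2,3,4} : Finset (Fin 5)).erase 4 = ({2,3} : Finset (Fin 5)) from by decide] at h234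
  intro S hcard
  rcases henum S hcard with rfl | rfl | rfl | rfl | rfl | rfl | rfl | rfl | rfl | rfl
  · have h6 : (6 : K) * coeff (eS {0,1}) p = 0 := by
      linear_combination 2*h012 + 2*h013 + 2*h014 - h023 - h024 - h034 - h123 - h124 - h134 + 2*h234
    exact (mul_eq_zero.mp h6).resolve_left (by norm_num)
  · have h6 : (6 : K) * coeff (eS {0,2}) p = 0 := by
      linear_combination 2*h012 - h013 - h014 + 2*h023 + 2*h024 - h034 - h123 - h124 + 2*h134 - h234
    exact (mul_eq_zero.mp h6).resolve_left (by norm_num)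
  · have h6 : (6 : K) * coeff (eS {0,3}) p = 0 := by
      linear_combination - h012 + 2*h013 - h014 + 2*h023 - h024 + 2*h034 - h123 + 2*h124 - h134 - h234
    exact (mul_eq_zero.mp h6).resolve_left (by norm_num)
  · have h6 : (6 : K) * coeff (eS {0,4}) p = 0 := by
      linear_combination - h012 - h013 + 2*h014 - h023 + 2*h024 + 2*h034 + 2*h123 - h124 - h134 - h234
    exact (mul_eq_zero.mp h6).resolve_left (by norm_num)
  · have h6 : (6 : K) * coeff (eS {1,2}) p = 0 := by
      linear_combination 2*h012 - h013 - h014 - h023 - h024 + 2*h034 + 2*h123 + 2*h124 - h134 - h234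
    exact (mul_eq_zero.mp h6).resolve_left (by norm_num)
  · have h6 : (6 : K) * coeff (eS {1,3}) p = 0 := by
      linear_combination - h012 + 2*h013 - h014 - h023 + 2*h024 - h034 + 2*h123 - h124 + 2*h134 - h234
    exact (mul_eq_zero.mp h6).resolve_left (by norm_num)
  · have h6 : (6 : K) * coeff (eS {1,4}) p = 0 := by
      linear_combination - h012 - h013 + 2*h014 + 2*h023 - h024 - h034 - h123 + 2*h124 + 2*h134 - h234
    exact (mul_eq_zero.mp h6).resolve_left (by norm_num)
  · have h6 : (6 : K) * coeff (eS {2,3}) p = 0 := by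
      linear_combination - h012 - h013 + 2*h014 + 2*h023 - h024 - h034 + 2*h123 - h124 - h134 + 2*h234
    exact (mul_eq_zero.mp h6).resolve_left (by norm_num)
  · have h6 : (6 : K) * coeff (eS {2,4}) p = 0 := by
      linear_combination - h012 + 2*h013 - h014 - h023 + 2*h024 - h034 - h123 + 2*h124 - h134 + 2*h234
    exact (mul_eq_zero.mp h6).resolve_left (by norm_num)
  · have h6 : (6 : K) * coeff (eS {3,4}) p = 0 := by
      linear_combination 2*h012 - h013 - h014 - h023 - h024 + 2*h034 - h123 - h124 + 2*h134 + 2*h234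
    exact (mul_eq_zero.mp h6).resolve_left (by norm_num)

end Chunk5

section Chunk6
variable {K : Type*} [Field K]

lemma wlp_inj (i : ℕ)
    (hsolve : ∀ p : MvPolynomial (Fin 5) K,
      (∀ T : Finset (Fin 5), ¬ ({0,1,2,3} : Finset (Fin 5)) ⊆ T →
        ∑ k ∈ T, coeff (eS (T.erase k)) p = 0) →
      ∀ S : Finset (Fin 5), S.card = i → coeff (eS S) p = 0) :
    ∀ x ∈ gradedPiece (fiveCycleIdeal K) i,
      Ideal.Quotient.mk (fiveCycleIdeal K) (∑ k : Fin 5, X k) * x = 0 → x = 0 := by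
  intro x hx hmul
  obtain ⟨p, hhom, hgood, rfl⟩ := piece_rep hx
  rw [← map_mul, Ideal.Quotient.eq_zero_iff_mem] at hmul
  have hmem : p * (∑ k : Fin 5, X k) ∈ fiveCycleIdeal K := by
    rwa [mul_comm] at hmul
  have heqs := fun T hT => eqn hmem (T := T) hT
  have hp0 : p = 0 := by
    apply MvPolynomial.ext
    intro m
    rw [coeff_zero]
    by_contra h0
    have hnb := hgood m h0
    have hdeg : m.degree = i := by
      by_contra h
      exact h0 (hhom.coeff_eq_zero h)
    have hm_eq : m = eS m.support := eq_eS_support (le_one_of_not_bad hnb)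
    have hcard : m.support.card = i := by
      rw [hm_eq, eS_degree] at hdeg; exact hdeg
    exact h0 (by rw [hm_eq]; exact hsolve p heqs m.support hcard)
  rw [hp0, map_zero]

lemma wlp_surj3 :
    ∀ y ∈ gradedPiece (fiveCycleIdeal K) 4,
      ∃ x ∈ gradedPiece (fiveCycleIdeal K) 3,
        Ideal.Quotient.mk (fiveCycleIdeal K) (∑ k : Fin 5, X k) * x = y := by
  have key : ∀ T : Idx 4, ∃ x ∈ gradedPiece (fiveCycleIdeal K) 3,
      Ideal.Quotient.mk (fiveCycleIdeal K) (∑ k : Fin 5, X k) * x = bV K 4 T := by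
    rintro ⟨T, hcard, hgood⟩
    have h4T : (4 : Fin 5) ∈ T := by
      by_contra h4
      have hsub : T ⊆ {0,1,2,3} := by
        intro k hk
        fin_cases k <;> simp_all <;> decide
      exact hgood (by
        have : T = {0,1,2,3} := Finset.eq_of_subset_of_card_le hsub (by rw [hcard]; decide)
        rw [this])
    set S := T.erase 4 with hS
    have hScard : S.card = 3 := by rw [hS, Finset.card_erase_of_mem h4T, hcard]
    have hSsub : S ⊆ ({0,1,2,3} : Finset (Fin 5)) := by
      intro k hk
      rw [hS, Finset.mem_erase] at hk
      fin_cases k <;> simp_all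
    have hSgood : ¬ ({0,1,2,3} : Finset (Fin 5)) ⊆ S := by
      intro h
      have := Finset.card_le_card h
      rw [hScard] at this
      exact absurd this (by decide)
    refine ⟨bV K 3 ⟨S, hScard, hSgood⟩, mk_mem_piece (by
      have := homog_eS (K := K) S 1
      rwa [hScard] at this), ?_⟩
    -- ℓ * monomial (eS S) 1 ≡ monomial (eS T) 1
    rw [bV, bV, ← map_mul, Ideal.Quotient.mk_eq_mk_iff_sub_mem]
    have hT_eq : T = insert 4 S := by
      rw [hS, Finset.insert_erase h4T]
    have expand : (∑ k : Fin 5, X k) * monomial (eS S) (1 : K) =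
        ∑ k : Fin 5, monomial (Finsupp.single k 1 + eS S) 1 := by
      rw [Finset.sum_mul]
      apply Finset.sum_congr rfl
      intro k _
      rw [X, monomial_mul, one_mul]
    rw [expand]
    have h4S : (4 : Fin 5) ∉ S := by rw [hS]; exact Finset.notMem_erase 4 T
    have split : (∑ k : Fin 5, monomial (Finsupp.single k 1 + eS S) (1:K)) =
        monomial (Finsupp.single (4 : Fin 5) 1 + eS S) 1 +
          ∑ k ∈ ({0,1,2,3} : Finset (Fin 5)), monomial (Finsupp.single k 1 + eS S) 1 := by
      rw [show (Finset.univ : Finset (Fin 5)) = insert 4 ({0,1,2,3} : Finset (Fin 5)) from by decide,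
        Finset.sum_insert (by decide)]
    rw [split]
    have h4eq : Finsupp.single (4 : Fin 5) 1 + eS S = eS T := by
      rw [eS_add_single h4S, ← hT_eq]
    rw [h4eq]
    rw [show (monomial (eS T) (1:K) +
        ∑ k ∈ ({0,1,2,3} : Finset (Fin 5)), monomial (Finsupp.single k 1 + eS S) 1) -
        monomial (eS T) 1 =
        ∑ k ∈ ({0,1,2,3} : Finset (Fin 5)), monomial (Finsupp.single k 1 + eS S) 1 from by ring]
    apply Ideal.sum_mem
    intro k hk
    apply bad_mem
    by_cases hkS : k ∈ S
    · refine Or.inl ⟨k, ?_⟩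
      rw [Finsupp.add_apply, Finsupp.single_apply, if_pos rfl, eS_apply, if_pos hkS]
    · have : insert k S = ({0,1,2,3} : Finset (Fin 5)) := by
        apply Finset.eq_of_subset_of_card_le
        · intro j hj
          rcases Finset.mem_insert.mp hj with rfl | hjS
          · exact hk
          · exact hSsub hjS
        · rw [Finset.card_insert_of_notMem hkS, hScard]; decide
      rw [eS_add_single hkS, this]
      exact Or.inr le_rfl
  have hle : gradedPiece (fiveCycleIdeal K) 4 ≤ Submodule.map
      (LinearMap.mulLeft K (Ideal.Quotient.mk (fiveCycleIdeal K) (∑ k : Fin 5, X k)))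
      (gradedPiece (fiveCycleIdeal K) 3) := by
    rw [piece_eq_span 4, Submodule.span_le]
    rintro _ ⟨T, rfl⟩
    obtain ⟨x, hx, hxe⟩ := key T
    exact ⟨x, hx, by simpa [LinearMap.mulLeft_apply] using hxe⟩
  intro y hy
  obtain ⟨x, hx, he⟩ := hle hy
  exact ⟨x, hx, by simpa [LinearMap.mulLeft_apply] using he⟩

end Chunk6

end Stmt14Aux

open Stmt14Aux

/-- `C = K[y_1,…,y_5]/(y_1^2,…,y_5^2, y_1y_2y_3y_4)` has Hilbert series
`1 + 5t + 10t^2 + 10t^3 + 4t^4` and has the Weak Lefschetz Property with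
Lefschetz element `ℓ = y_1 + y_2 + y_3 + y_4 + y_5`. -/
theorem stmt14 {K : Type*} [Field K] [CharZero K] :
    Module.finrank K (gradedPiece (fiveCycleIdeal K) 0) = 1 ∧
    Module.finrank K (gradedPiece (fiveCycleIdeal K) 1) = 5 ∧
    Module.finrank K (gradedPiece (fiveCycleIdeal K) 2) = 10 ∧
    Module.finrank K (gradedPiece (fiveCycleIdeal K) 3) = 10 ∧
    Module.finrank K (gradedPiece (fiveCycleIdeal K) 4) = 4 ∧
    (∀ i : ℕ, 5 ≤ i → gradedPiece (fiveCycleIdeal K) i = ⊥) ∧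
    ∀ i : ℕ,
      (∀ x ∈ gradedPiece (fiveCycleIdeal K) i,
        Ideal.Quotient.mk (fiveCycleIdeal K) (∑ k : Fin 5, X k) * x = 0 → x = 0) ∨
      (∀ y ∈ gradedPiece (fiveCycleIdeal K) (i + 1),
        ∃ x ∈ gradedPiece (fiveCycleIdeal K) i,
          Ideal.Quotient.mk (fiveCycleIdeal K) (∑ k : Fin 5, X k) * x = y) := by
  refine ⟨?_, ?_, ?_, ?_, ?_, fun i hi => piece_bot hi, fun i => ?_⟩
  · rw [finrank_piece]; decide
  · rw [finrank_piece]; decide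
  · rw [finrank_piece]; decide
  · rw [finrank_piece]; decide
  · rw [finrank_piece]; decide
  · rcases i with _ | _ | _ | _ | i
    · exact Or.inl (wlp_inj 0 (fun p heqs S h => solve0 heqs S h))
    · exact Or.inl (wlp_inj 1 (fun p heqs S h => solve1 heqs S h))
    · exact Or.inl (wlp_inj 2 (fun p heqs S h => solve2 heqs S h))
    · exact Or.inr wlp_surj3
    · refine Or.inr fun y hy => ⟨0, Submodule.zero_mem _, ?_⟩
      rw [piece_bot (by omega)] at hy
      rw [mul_zero]
      exact ((Submodule.mem_bot K).mp hy).symm
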